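/- The generating function B_n(x_1,…,x_n) = Σ_{0 ≤ e_1 ≤ ⋯ ≤ e_n} B_e x_1^{e_1} x_2^{e_2−e_1} ⋯ x_n^{e_n−e_{n-1}}, where B_e is the number of lattice points (f_I)_{∅≠I⊆{1,…,n-1}} with f_I ∈ Z_{≥0} and Σ_{I ∋ i} f_I ≤ e_{i+1} − e_i for all i, equals ∏_{i=1}^n (1 − x_i)^{-1} ∏_{∅ ≠ I ⊆ {2,…,n}} (1 − ∏_{i∈I} x_i)^{-1} as a formal power series. -/

import Mathlib

open Finset

noncomputable section GFaux

/-- indicator finsupp of a finset -/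
def GFind (I : Finset ℕ) : ℕ →₀ ℕ := ∑ i ∈ I, Finsupp.single i 1

open Classical in
/-- geometric series in the monomial `m` -/
def GFgeom (m : ℕ →₀ ℕ) : MvPowerSeries ℕ ℚ := fun e => if ∃ k : ℕ, e = k • m then 1 else 0

open Classical in
lemma GFgeom_coeff (m e : ℕ →₀ ℕ) :
    MvPowerSeries.coeff (R := ℚ) e (GFgeom m) = if ∃ k : ℕ, e = k • m then 1 else 0 := rfl

lemma GFind_apply (I : Finset ℕ) (j : ℕ) : GFind I j = if j ∈ I then 1 else 0 := by
  simp [GFind, Finsupp.finset_sum_apply, Finsupp.single_apply]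

lemma GFind_ne_zero {I : Finset ℕ} (hI : I.Nonempty) : GFind I ≠ 0 := by
  obtain ⟨i, hi⟩ := hI
  intro h
  have := GFind_apply I i
  rw [h] at this
  simp [hi] at this

lemma smul_GFind_apply (k : ℕ) (I : Finset ℕ) (j : ℕ) :
    (k • GFind I) j = if j ∈ I then k else 0 := by
  rw [Finsupp.smul_apply, GFind_apply]
  split <;> simp

lemma support_smul_GFind (k : ℕ) (I : Finset ℕ) : (k • GFind I).support ⊆ I := by
  intro j hj
  rw [Finsupp.mem_support_iff, smul_GFind_apply] at hj
  by_contra h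
  simp [h] at hj

lemma GFprod_X (I : Finset ℕ) :
    (∏ i ∈ I, (MvPowerSeries.X i : MvPowerSeries ℕ ℚ)) = MvPowerSeries.monomial (R := ℚ) (GFind I) 1 := by
  induction I using Finset.cons_induction with
  | empty =>
      rw [Finset.prod_empty, GFind, Finset.sum_empty, MvPowerSeries.monomial_zero_one]
  | cons a s ha ih =>
      rw [Finset.prod_cons, ih, MvPowerSeries.X_def, MvPowerSeries.monomial_mul_monomial]
      simp only [GFind, Finset.sum_cons, one_mul]

lemma GFgeom_inv {m : ℕ →₀ ℕ} (hm : m ≠ 0) :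
    (1 - MvPowerSeries.monomial (R := ℚ) m 1) * GFgeom m = 1 := by
  classical
  ext e
  rw [sub_mul, one_mul, map_sub, MvPowerSeries.coeff_monomial_mul, one_mul,
    MvPowerSeries.coeff_one]
  simp only [GFgeom_coeff]
  by_cases he : e = 0
  · subst he
    rw [if_pos rfl, if_pos ⟨0, by simp⟩, if_neg (fun h => hm (nonpos_iff_eq_zero.mp h)), sub_zero]
  · rw [if_neg he]
    by_cases hk : ∃ k : ℕ, e = k • m
    · obtain ⟨k, rfl⟩ := hk
      have hk0 : k ≠ 0 := by rintro rfl; simp at he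
      have hle : m ≤ k • m := by
        rw [Finsupp.le_iff]
        intro j _
        rw [Finsupp.smul_apply, smul_eq_mul]
        exact Nat.le_mul_of_pos_left _ (Nat.pos_of_ne_zero hk0)
      have hk1 : k = (k - 1) + 1 := (Nat.succ_pred_eq_of_pos (Nat.pos_of_ne_zero hk0)).symm
      have h2 : k • m - m = (k - 1) • m := by
        conv_lhs => rw [hk1]
        rw [succ_nsmul, add_tsub_cancel_right]
      rw [if_pos ⟨k, rfl⟩, if_pos hle, if_pos ⟨k - 1, h2⟩, sub_self]
    · rw [if_neg hk]
      by_cases hle : m ≤ e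
      · rw [if_pos hle, if_neg, sub_self]
        rintro ⟨k, hkk⟩
        exact hk ⟨k + 1, by rw [succ_nsmul, ← hkk, tsub_add_cancel_of_le hle]⟩
      · rw [if_neg hle, sub_zero]


lemma GFprod_geom_single (s : Finset ℕ) (e : ℕ →₀ ℕ) :
    MvPowerSeries.coeff (R := ℚ) e (∏ i ∈ s, GFgeom (Finsupp.single i 1)) =
      if e.support ⊆ s then 1 else 0 := by
  classical
  induction s using Finset.cons_induction generalizing e with
  | empty =>
      rw [Finset.prod_empty, MvPowerSeries.coeff_one]
      by_cases he : e = 0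
      · rw [if_pos he, if_pos (by simp [he])]
      · rw [if_neg he, if_neg (by simpa [Finset.subset_empty, Finsupp.support_eq_empty] using he)]
  | cons a s ha ih =>
      rw [Finset.prod_cons, MvPowerSeries.coeff_mul]
      have hsle : Finsupp.single a (e a) ≤ e := by
        rw [Finsupp.le_iff]
        intro j hj
        rw [Finsupp.single_apply]
        split
        · next h => exact h ▸ le_rfl
        · exact Nat.zero_le _
      have hmem : (Finsupp.single a (e a), e - Finsupp.single a (e a)) ∈ antidiagonal e := by
        rw [Finset.HasAntidiagonal.mem_antidiagonal]
        exact add_tsub_cancel_of_le hsle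
      have hside : ∀ p ∈ antidiagonal e, p ≠ (Finsupp.single a (e a), e - Finsupp.single a (e a)) →
          (MvPowerSeries.coeff (R := ℚ) p.1) (GFgeom (Finsupp.single a 1)) *
            (MvPowerSeries.coeff (R := ℚ) p.2) (∏ x ∈ s, GFgeom (Finsupp.single x 1)) = 0 := by
        intro p hp hne
        by_contra h
        have h1 := left_ne_zero_of_mul h
        have h2 := right_ne_zero_of_mul h
        rw [GFgeom_coeff, ne_eq, ite_eq_right_iff, not_forall] at h1
        obtain ⟨⟨k, hk⟩, -⟩ := h1
        rw [ih, ne_eq, ite_eq_right_iff, not_forall] at h2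
        obtain ⟨hsub, -⟩ := h2
        rw [Finset.HasAntidiagonal.mem_antidiagonal] at hp
        have hp1 : p.1 = Finsupp.single a k := by
          rw [hk, Finsupp.smul_single, smul_eq_mul, mul_one]
        have hp2a : p.2 a = 0 := by
          rw [← Finsupp.notMem_support_iff]
          exact fun hin => ha (hsub hin)
        have hea : e a = k := by
          rw [← hp, Finsupp.add_apply, hp1, Finsupp.single_apply, if_pos rfl, hp2a, add_zero]
        apply hne
        have hp1' : p.1 = Finsupp.single a (e a) := by rw [hp1, hea]
        have hp2' : p.2 = e - Finsupp.single a (e a) := by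
          rw [← hp1']
          exact eq_tsub_of_add_eq (by rw [add_comm, hp])
        exact Prod.ext hp1' hp2'
      rw [Finset.sum_eq_single_of_mem _ hmem hside]
      · have hsupp : (e - Finsupp.single a (e a)).support = e.support.erase a := by
          ext j
          rcases eq_or_ne j a with rfl | hj
          · simp [Finsupp.tsub_apply, Finsupp.single_apply]
          · rw [Finsupp.mem_support_iff, Finsupp.tsub_apply, Finsupp.single_apply,
              if_neg (fun h => hj h.symm), Nat.sub_zero, Finset.mem_erase]
            simp [hj, Finsupp.mem_support_iff]
        rw [GFgeom_coeff, if_pos ⟨e a, by rw [Finsupp.smul_single, smul_eq_mul, mul_one]⟩,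
          one_mul, ih, hsupp]
        congr 1
        rw [Finset.cons_eq_insert, eq_iff_iff, ← Finset.subset_insert_iff]

lemma GFP1G1 (n : ℕ) :
    (∏ i ∈ Finset.Icc 1 n, (1 - (MvPowerSeries.X i : MvPowerSeries ℕ ℚ))) *
      (∏ i ∈ Finset.Icc 1 n, GFgeom (Finsupp.single i 1)) = 1 := by
  rw [← Finset.prod_mul_distrib]
  apply Finset.prod_eq_one
  intro i _
  rw [MvPowerSeries.X_def]
  exact GFgeom_inv (fun h => one_ne_zero (Finsupp.single_eq_zero.mp h))

lemma GFP2G2 (n : ℕ) :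
    (∏ I ∈ (Finset.Icc 2 n).powerset.filter (fun I => I.Nonempty),
        (1 - ∏ i ∈ I, (MvPowerSeries.X i : MvPowerSeries ℕ ℚ))) *
      (∏ I ∈ (Finset.Icc 2 n).powerset.filter (fun I => I.Nonempty), GFgeom (GFind I)) = 1 := by
  rw [← Finset.prod_mul_distrib]
  apply Finset.prod_eq_one
  intro I hI
  rw [Finset.mem_filter] at hI
  rw [GFprod_X]
  exact GFgeom_inv (GFind_ne_zero hI.2)


lemma GFdown_up (J : Finset ℕ) : (J.image (· + 1)).image (· - 1) = J := by
  rw [Finset.image_image]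
  have : (fun x => x - 1) ∘ (fun x => x + 1) = id := by
    funext x; simp
  rw [this, Finset.image_id]

lemma GFup_down {I : Finset ℕ} (hI : ∀ x ∈ I, 1 ≤ x) : (I.image (· - 1)).image (· + 1) = I := by
  rw [Finset.image_image]
  rw [show I.image ((fun x => x + 1) ∘ (fun x => x - 1)) = I.image id from
    Finset.image_congr (fun x hx => by simp [Nat.sub_add_cancel (hI x hx)]), Finset.image_id]

/-- extraction map -/
noncomputable def GFpsi (l : Finset ℕ →₀ (ℕ →₀ ℕ)) : Finset ℕ → ℕ := fun J =>
  if h : J.Nonempty then l (J.image (· + 1)) (J.min' h + 1) else 0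

lemma GFrecover {n : ℕ} {l : Finset ℕ →₀ (ℕ →₀ ℕ)} {I : Finset ℕ} {k : ℕ}
    (hI : I.Nonempty) (hI2 : I ⊆ Finset.Icc 2 n) (hl : l I = k • GFind I) :
    GFpsi l (I.image (· - 1)) = k := by
  have h1 : ∀ x ∈ I, 1 ≤ x := fun x hx => le_trans (by norm_num) (Finset.mem_Icc.mp (hI2 hx)).1
  have hJ : (I.image (· - 1)).Nonempty := hI.image _
  rw [GFpsi]
  rw [dif_pos hJ, GFup_down h1, hl, smul_GFind_apply, if_pos]
  obtain ⟨x, hx, hmin⟩ := Finset.mem_image.mp (Finset.min'_mem _ hJ)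
  rw [← hmin, Nat.sub_add_cancel (h1 x hx)]
  exact hx

lemma GFsum_shift {n : ℕ} (hn : 1 ≤ n) (g : Finset ℕ → ℕ) (j : ℕ) (hj : j ∈ Finset.Icc 2 n) :
    ∑ I ∈ ((Finset.Icc 2 n).powerset.filter (fun I => I.Nonempty)).filter (fun I => j ∈ I),
        g (I.image (· - 1)) =
      ∑ J ∈ (Finset.Icc 1 (n - 1)).powerset.filter (fun J => j - 1 ∈ J), g J := by
  rw [Finset.mem_Icc] at hj
  apply Finset.sum_nbij' (i := fun I => I.image (· - 1)) (j := fun J => J.image (· + 1))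
  · intro I hI
    simp only [Finset.mem_filter, Finset.mem_powerset] at hI ⊢
    obtain ⟨⟨hsub, -⟩, hjI⟩ := hI
    constructor
    · intro y hy
      obtain ⟨x, hx, rfl⟩ := Finset.mem_image.mp hy
      have := Finset.mem_Icc.mp (hsub hx)
      rw [Finset.mem_Icc]
      omega
    · exact Finset.mem_image.mpr ⟨j, hjI, rfl⟩
  · intro J hJ
    simp only [Finset.mem_filter, Finset.mem_powerset] at hJ ⊢
    obtain ⟨hsub, hiJ⟩ := hJ
    have hup : ∀ y ∈ J.image (· + 1), y ∈ Finset.Icc 2 n := by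
      intro y hy
      obtain ⟨x, hx, rfl⟩ := Finset.mem_image.mp hy
      have := Finset.mem_Icc.mp (hsub hx)
      rw [Finset.mem_Icc]
      omega
    refine ⟨⟨fun y hy => hup y hy, ⟨j - 1 + 1, Finset.mem_image.mpr ⟨j - 1, hiJ, rfl⟩⟩⟩, ?_⟩
    have : j - 1 + 1 = j := by omega
    exact Finset.mem_image.mpr ⟨j - 1, hiJ, this⟩
  · intro I hI
    simp only [Finset.mem_filter, Finset.mem_powerset] at hI
    exact GFup_down (fun x hx => by have := Finset.mem_Icc.mp (hI.1.1 hx); omega)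
  · intro J _
    exact GFdown_up J
  · intro I _
    rfl

lemma GFG2_support {n : ℕ} {e : ℕ →₀ ℕ}
    (h : MvPowerSeries.coeff (R := ℚ) e
      (∏ I ∈ (Finset.Icc 2 n).powerset.filter (fun I => I.Nonempty), GFgeom (GFind I)) ≠ 0) :
    e.support ⊆ Finset.Icc 2 n := by
  classical
  rw [MvPowerSeries.coeff_prod] at h
  obtain ⟨l, hl, hne⟩ := Finset.exists_ne_zero_of_sum_ne_zero h
  rw [Finset.mem_finsuppAntidiag] at hl
  obtain ⟨hsum, hsupp⟩ := hl
  rw [← hsum]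
  intro j hj
  obtain ⟨I, hI, hjI⟩ := Finset.mem_biUnion.mp (Finsupp.support_finset_sum hj)
  have hfac : MvPowerSeries.coeff (R := ℚ) (l I) (GFgeom (GFind I)) ≠ 0 :=
    Finset.prod_ne_zero_iff.mp hne I hI
  rw [GFgeom_coeff, ne_eq, ite_eq_right_iff, not_forall] at hfac
  obtain ⟨⟨k, hk⟩, -⟩ := hfac
  rw [Finset.mem_filter, Finset.mem_powerset] at hI
  exact hI.1 (support_smul_GFind k I (hk ▸ hjI))


lemma GFcount (n : ℕ) (hn : 1 ≤ n) (d : ℕ →₀ ℕ) (hd : d.support ⊆ Finset.Icc 1 n) :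
    MvPowerSeries.coeff (R := ℚ) d
      ((∏ i ∈ Finset.Icc 1 n, GFgeom (Finsupp.single i 1)) *
       (∏ I ∈ (Finset.Icc 2 n).powerset.filter (fun I => I.Nonempty), GFgeom (GFind I))) =
    Set.ncard {f : Finset ℕ → ℕ |
      (∀ I, f I ≠ 0 → I.Nonempty ∧ I ⊆ Finset.Icc 1 (n - 1)) ∧
      ∀ i ∈ Finset.Icc 1 (n - 1),
        (∑ I ∈ ((Finset.Icc 1 (n - 1)).powerset.filter fun I => i ∈ I), f I) ≤ d (i + 1)} := by
  classical
  set P := (Finset.Icc 2 n).powerset.filter (fun I => I.Nonempty) with hP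
  have hPmem : ∀ I, I ∈ P ↔ (I ⊆ Finset.Icc 2 n ∧ I.Nonempty) := by
    intro I; rw [hP, Finset.mem_filter, Finset.mem_powerset]
  set good : (Finset ℕ →₀ (ℕ →₀ ℕ)) → Prop := fun l => ∀ I ∈ P, ∃ k : ℕ, l I = k • GFind I
    with hgood
  set U : Finset (Finset ℕ →₀ (ℕ →₀ ℕ)) :=
    (Finset.HasAntidiagonal.antidiagonal d).biUnion (fun p => (Finset.finsuppAntidiag P p.2).filter good) with hU
  have hdisj : ∀ p ∈ Finset.HasAntidiagonal.antidiagonal d, ∀ q ∈ Finset.HasAntidiagonal.antidiagonal d, p ≠ q →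
      Disjoint ((Finset.finsuppAntidiag P p.2).filter good)
        ((Finset.finsuppAntidiag P q.2).filter good) := by
    intro p hp q hq hne
    rw [Finset.disjoint_left]
    intro l hlp hlq
    rw [Finset.mem_filter, Finset.mem_finsuppAntidiag] at hlp hlq
    apply hne
    have h2 : p.2 = q.2 := by rw [← hlp.1.1, hlq.1.1]
    rw [Finset.HasAntidiagonal.mem_antidiagonal] at hp hq
    have h1 : p.1 = q.1 := by
      apply add_right_cancel (b := p.2)
      rw [hp, h2, hq]
    exact Prod.ext h1 h2
  have step1 : MvPowerSeries.coeff (R := ℚ) d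
      ((∏ i ∈ Finset.Icc 1 n, GFgeom (Finsupp.single i 1)) * (∏ I ∈ P, GFgeom (GFind I))) =
      (U.card : ℚ) := by
    rw [MvPowerSeries.coeff_mul]
    have h1 : ∀ p ∈ Finset.HasAntidiagonal.antidiagonal d,
        (MvPowerSeries.coeff (R := ℚ) p.1) (∏ i ∈ Finset.Icc 1 n, GFgeom (Finsupp.single i 1)) *
          (MvPowerSeries.coeff (R := ℚ) p.2) (∏ I ∈ P, GFgeom (GFind I)) =
          ((((Finset.finsuppAntidiag P p.2).filter good).card : ℕ) : ℚ) := by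
      intro p hp
      rw [Finset.HasAntidiagonal.mem_antidiagonal] at hp
      have hs1 : p.1.support ⊆ Finset.Icc 1 n := by
        intro j hj
        apply hd
        rw [Finsupp.mem_support_iff] at hj ⊢
        rw [← hp, Finsupp.add_apply]
        omega
      rw [GFprod_geom_single, if_pos hs1, one_mul, MvPowerSeries.coeff_prod]
      calc (∑ l ∈ Finset.finsuppAntidiag P p.2,
              ∏ I ∈ P, MvPowerSeries.coeff (R := ℚ) (l I) (GFgeom (GFind I)))
          = ∑ l ∈ Finset.finsuppAntidiag P p.2, (if good l then (1 : ℚ) else 0) := by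
            apply Finset.sum_congr rfl
            intro l _
            simp only [GFgeom_coeff]
            rw [Finset.prod_boole]
        _ = ((((Finset.finsuppAntidiag P p.2).filter good).card : ℕ) : ℚ) := by
            rw [Finset.sum_boole]
    rw [Finset.sum_congr rfl h1, ← Nat.cast_sum, ← Finset.card_biUnion hdisj]
  rw [step1]
  have hUmem : ∀ l, l ∈ U ↔ (P.sum l ≤ d ∧ l.support ⊆ P ∧ good l) := by
    intro l
    rw [hU, Finset.mem_biUnion]
    constructor
    · rintro ⟨p, hp, hl⟩
      rw [Finset.mem_filter, Finset.mem_finsuppAntidiag] at hl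
      rw [Finset.HasAntidiagonal.mem_antidiagonal] at hp
      refine ⟨?_, hl.1.2, hl.2⟩
      rw [hl.1.1]
      calc p.2 ≤ p.1 + p.2 := le_add_self
      _ = d := hp
    · rintro ⟨hle, hsupp, hg⟩
      refine ⟨(d - P.sum l, P.sum l), ?_, ?_⟩
      · rw [Finset.HasAntidiagonal.mem_antidiagonal]
        exact tsub_add_cancel_of_le hle
      · rw [Finset.mem_filter, Finset.mem_finsuppAntidiag]
        exact ⟨⟨rfl, hsupp⟩, hg⟩
  -- upward shift stays in P
  have hupP : ∀ J : Finset ℕ, J.Nonempty → J ⊆ Finset.Icc 1 (n - 1) →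
      J.image (· + 1) ∈ P := by
    intro J hJne hJsub
    rw [hPmem]
    refine ⟨?_, hJne.image _⟩
    intro y hy
    obtain ⟨x, hx, rfl⟩ := Finset.mem_image.mp hy
    have := Finset.mem_Icc.mp (hJsub hx)
    rw [Finset.mem_Icc]
    omega
  have hinj : Set.InjOn GFpsi ↑U := by
    intro l hl m hm h
    rw [Finset.mem_coe, hUmem] at hl hm
    apply Finsupp.ext
    intro I
    by_cases hI : I ∈ P
    · obtain ⟨hIsub, hInon⟩ := (hPmem I).mp hI
      obtain ⟨k, hk⟩ := hl.2.2 I hI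
      obtain ⟨k', hk'⟩ := hm.2.2 I hI
      have e1 := GFrecover (n := n) hInon hIsub hk
      have e2 := GFrecover (n := n) hInon hIsub hk'
      rw [h] at e1
      have : k = k' := by rw [← e1, ← e2]
      rw [hk, hk', this]
    · have h1 : l I = 0 := Finsupp.notMem_support_iff.mp (fun hc => hI (hl.2.1 hc))
      have h2 : m I = 0 := Finsupp.notMem_support_iff.mp (fun hc => hI (hm.2.1 hc))
      rw [h1, h2]
  have himg : {f : Finset ℕ → ℕ |
      (∀ I, f I ≠ 0 → I.Nonempty ∧ I ⊆ Finset.Icc 1 (n - 1)) ∧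
      ∀ i ∈ Finset.Icc 1 (n - 1),
        (∑ I ∈ ((Finset.Icc 1 (n - 1)).powerset.filter fun I => i ∈ I), f I) ≤ d (i + 1)}
      = GFpsi '' ↑U := by
    ext f
    simp only [Set.mem_setOf_eq, Set.mem_image, Finset.mem_coe]
    constructor
    · rintro ⟨hf1, hf2⟩
      set l : Finset ℕ →₀ (ℕ →₀ ℕ) :=
        ∑ I ∈ P, Finsupp.single I (f (I.image (· - 1)) • GFind I) with hl
      have hlapp : ∀ I, l I = if I ∈ P then f (I.image (· - 1)) • GFind I else 0 := by
        intro I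
        rw [hl, Finsupp.finset_sum_apply]
        rw [Finset.sum_congr rfl (fun J _ => Finsupp.single_apply)]
        exact Finset.sum_ite_eq' P I _
      have hsupp : l.support ⊆ P := by
        intro I hI
        rw [Finsupp.mem_support_iff, hlapp] at hI
        by_contra hc
        rw [if_neg hc] at hI
        exact hI rfl
      have hg : good l := fun I hI => ⟨f (I.image (· - 1)), by rw [hlapp, if_pos hI]⟩
      have hsum : ∀ j, (P.sum l) j = ∑ I ∈ P.filter (fun I => j ∈ I), f (I.image (· - 1)) := by
        intro j
        rw [Finsupp.finset_sum_apply]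
        rw [Finset.sum_congr rfl (fun I hI => by
          rw [hlapp, if_pos hI, smul_GFind_apply])]
        exact (Finset.sum_filter _ _).symm
      have hle : P.sum l ≤ d := by
        rw [Finsupp.le_def]
        intro j
        rw [hsum]
        by_cases hj : j ∈ Finset.Icc 2 n
        · rw [GFsum_shift hn f j hj]
          have hj' := Finset.mem_Icc.mp hj
          have hmem : j - 1 ∈ Finset.Icc 1 (n - 1) := by rw [Finset.mem_Icc]; omega
          have := hf2 (j - 1) hmem
          have hjj : j - 1 + 1 = j := by omega
          rw [hjj] at this
          exact this
        · have : P.filter (fun I => j ∈ I) = ∅ := by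
            rw [Finset.filter_eq_empty_iff]
            intro I hI
            exact fun hjI => hj (((hPmem I).mp hI).1 hjI)
          rw [this, Finset.sum_empty]
          exact Nat.zero_le _
      refine ⟨l, (hUmem l).mpr ⟨hle, hsupp, hg⟩, ?_⟩
      funext J
      by_cases hJ : J.Nonempty
      · by_cases hJP : J.image (· + 1) ∈ P
        · obtain ⟨hIsub, hInon⟩ := (hPmem _).mp hJP
          have hk : l (J.image (· + 1)) =
              f ((J.image (· + 1)).image (· - 1)) • GFind (J.image (· + 1)) := by
            rw [hlapp, if_pos hJP]
          have := GFrecover (n := n) hInon hIsub hk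
          rw [GFdown_up] at this
          exact this
        · have h0 : l (J.image (· + 1)) = 0 := by rw [hlapp, if_neg hJP]
          rw [GFpsi, dif_pos hJ, h0]
          by_contra hc
          have := hf1 J (fun h => hc (by rw [h]; rfl))
          exact hJP (hupP J hJ this.2)
      · rw [GFpsi, dif_neg hJ]
        by_contra hc
        exact hJ (hf1 J (fun h => hc (by rw [h]))).1
    · rintro ⟨l, hlU, rfl⟩
      rw [hUmem] at hlU
      obtain ⟨hle, hsupp, hg⟩ := hlU
      constructor
      · intro J hJ
        rw [GFpsi] at hJ
        by_cases hJne : J.Nonempty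
        · rw [dif_pos hJne] at hJ
          have hlne : l (J.image (· + 1)) ≠ 0 := fun h => hJ (by rw [h]; rfl)
          have hJP : J.image (· + 1) ∈ P := hsupp (Finsupp.mem_support_iff.mpr hlne)
          obtain ⟨hIsub, -⟩ := (hPmem _).mp hJP
          refine ⟨hJne, ?_⟩
          intro x hx
          have : x + 1 ∈ Finset.Icc 2 n := hIsub (Finset.mem_image.mpr ⟨x, hx, rfl⟩)
          rw [Finset.mem_Icc] at this ⊢
          omega
        · rw [dif_neg hJne] at hJ
          exact absurd rfl hJ
      · intro i hi
        have hi' := Finset.mem_Icc.mp hi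
        have hj : i + 1 ∈ Finset.Icc 2 n := by rw [Finset.mem_Icc]; omega
        have hshift := GFsum_shift hn (GFpsi l) (i + 1) hj
        have hjj : i + 1 - 1 = i := by omega
        rw [hjj] at hshift
        rw [← hshift]
        have hterm : ∀ I ∈ P.filter (fun I => i + 1 ∈ I),
            GFpsi l (I.image (· - 1)) = (l I) (i + 1) := by
          intro I hI
          rw [Finset.mem_filter] at hI
          obtain ⟨hIP, hiI⟩ := hI
          obtain ⟨hIsub, hInon⟩ := (hPmem I).mp hIP
          obtain ⟨k, hk⟩ := hg I hIP
          rw [GFrecover (n := n) hInon hIsub hk, hk, smul_GFind_apply, if_pos hiI]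
        rw [Finset.sum_congr rfl hterm]
        calc (∑ I ∈ P.filter (fun I => i + 1 ∈ I), (l I) (i + 1))
            ≤ ∑ I ∈ P, (l I) (i + 1) :=
              Finset.sum_le_sum_of_subset (Finset.filter_subset _ _)
          _ = (P.sum l) (i + 1) := (Finsupp.finset_sum_apply _ _ _).symm
          _ ≤ d (i + 1) := Finsupp.le_def.mp hle (i + 1)
  rw [himg, Set.ncard_image_of_injOn hinj, Set.ncard_coe_finset]

end GFaux

/-- **Theorem B.** Let `B_n(x_1,…,x_n) = Σ_{0 ≤ e_1 ≤ ⋯ ≤ e_n} B_e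
x_1^{e_1} x_2^{e_2−e_1} ⋯ x_n^{e_n−e_{n-1}}`, where `B_e` is the number of tuples of
non-negative integers `(f_I)` indexed by non-empty subsets `I ⊆ {1,…,n-1}` with
`Σ_{I ∋ i} f_I ≤ e_{i+1} − e_i` for all `i`.  Working in `ℚ[[x_1,…,x_n]]` (variables
indexed by `{1,…,n} ⊆ ℕ`), the coefficient of the monomial with exponent vector `d`
(supported on `{1,…,n}`) is `B_e` for the differences `e_{i+1} − e_i = d (i+1)`.  Then
`B_n = ∏_{i=1}^n (1 − x_i)⁻¹ ∏_{∅ ≠ I ⊆ {2,…,n}} (1 − ∏_{i∈I} x_i)⁻¹`, stated as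
`B_n · ∏_{i=1}^n (1 − x_i) · ∏_{∅ ≠ I ⊆ {2,…,n}} (1 − ∏_{i∈I} x_i) = 1`. -/
theorem generating_function_flat_irreducible (n : ℕ) (hn : 1 ≤ n)
    (B : MvPowerSeries ℕ ℚ)
    (hB : ∀ d : ℕ →₀ ℕ, d.support ⊆ Finset.Icc 1 n →
      MvPowerSeries.coeff (R := ℚ) d B =
        Set.ncard {f : Finset ℕ → ℕ |
          (∀ I, f I ≠ 0 → I.Nonempty ∧ I ⊆ Finset.Icc 1 (n - 1)) ∧
          ∀ i ∈ Finset.Icc 1 (n - 1),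
            (∑ I ∈ ((Finset.Icc 1 (n - 1)).powerset.filter fun I => i ∈ I), f I)
              ≤ d (i + 1)})
    (hB0 : ∀ d : ℕ →₀ ℕ, ¬ d.support ⊆ Finset.Icc 1 n →
      MvPowerSeries.coeff (R := ℚ) d B = 0) :
    B * (∏ i ∈ Finset.Icc 1 n, (1 - MvPowerSeries.X i)) *
        (∏ I ∈ (Finset.Icc 2 n).powerset.filter (fun I => I.Nonempty),
          (1 - ∏ i ∈ I, MvPowerSeries.X i)) = 1 := by
  classical
  have hBeq : B = (∏ i ∈ Finset.Icc 1 n, GFgeom (Finsupp.single i 1)) *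
      (∏ I ∈ (Finset.Icc 2 n).powerset.filter (fun I => I.Nonempty), GFgeom (GFind I)) := by
    ext d
    by_cases hd : d.support ⊆ Finset.Icc 1 n
    · exact (hB d hd).trans (GFcount n hn d hd).symm
    · rw [hB0 d hd]
      symm
      rw [MvPowerSeries.coeff_mul]
      apply Finset.sum_eq_zero
      intro p hp
      by_contra h
      have h1 := left_ne_zero_of_mul h
      have h2 := right_ne_zero_of_mul h
      rw [GFprod_geom_single, ne_eq, ite_eq_right_iff, not_forall] at h1
      obtain ⟨hs1, -⟩ := h1
      have hs2 := GFG2_support h2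
      apply hd
      rw [Finset.HasAntidiagonal.mem_antidiagonal] at hp
      rw [← hp]
      intro j hj
      rcases Finset.mem_union.mp (Finsupp.support_add hj) with hj1 | hj2
      · exact hs1 hj1
      · have := Finset.mem_Icc.mp (hs2 hj2)
        rw [Finset.mem_Icc]
        omega
  rw [hBeq]
  have hre : ((∏ i ∈ Finset.Icc 1 n, GFgeom (Finsupp.single i 1)) *
      (∏ I ∈ (Finset.Icc 2 n).powerset.filter (fun I => I.Nonempty), GFgeom (GFind I))) *
      (∏ i ∈ Finset.Icc 1 n, (1 - (MvPowerSeries.X i : MvPowerSeries ℕ ℚ))) *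
      (∏ I ∈ (Finset.Icc 2 n).powerset.filter (fun I => I.Nonempty),
        (1 - ∏ i ∈ I, MvPowerSeries.X i)) =
      ((∏ i ∈ Finset.Icc 1 n, (1 - (MvPowerSeries.X i : MvPowerSeries ℕ ℚ))) *
        (∏ i ∈ Finset.Icc 1 n, GFgeom (Finsupp.single i 1))) *
      ((∏ I ∈ (Finset.Icc 2 n).powerset.filter (fun I => I.Nonempty),
          (1 - ∏ i ∈ I, MvPowerSeries.X i)) *
        (∏ I ∈ (Finset.Icc 2 n).powerset.filter (fun I => I.Nonempty), GFgeom (GFind I))) := by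
    ring
  rw [hre, GFP1G1 n, GFP2G2 n, one_mul]
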